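/- If w : [0,T] → ℝ^d is (γ,ρ)-irregular and g ∈ C^β([0,T]; ℝ) with β + γ > 1, then for all ξ ≠ 0 and 0 ≤ s ≤ t ≤ T, |∫_s^t e^{i ξ·w_r} g_r dr| ≤ C ‖Φ^w‖_{W^{γ,ρ}} ‖g‖_{C^β} |t−s|^γ |ξ|^{−ρ}, where the integral is a Young integral of g against r ↦ ∫_s^r e^{iξ·w_u} du and C depends only on β+γ and T. -/

import Mathlib

open MeasureTheory Real

noncomputable section

/-- `Φ^w_{s,t}(ξ) = ∫_s^t exp(i ξ · w_r) dr`. -/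
def phiW {d : ℕ} (w : ℝ → EuclideanSpace ℝ (Fin d)) (ξ : EuclideanSpace ℝ (Fin d))
    (s t : ℝ) : ℂ :=
  ∫ r in s..t, Complex.exp (Complex.I * ((inner ℝ ξ (w r) : ℝ) : ℂ))

/-- `w` is `(γ,ρ)`-irregular on `[0,T]` with constant `C`. -/
def IsIrregularWith {d : ℕ} (T γ ρ C : ℝ) (w : ℝ → EuclideanSpace ℝ (Fin d)) : Prop :=
  ∀ ξ : EuclideanSpace ℝ (Fin d), ξ ≠ 0 → ∀ s t : ℝ, 0 ≤ s → s ≤ t → t ≤ T →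
    ‖phiW w ξ s t‖ ≤ C * ‖ξ‖ ^ (-ρ) * (t - s) ^ γ

/-- Young-integral estimate: if `w` is `(γ,ρ)`-irregular with constant `K` and
`g ∈ C^β([0,T];ℝ)` with `β + γ > 1` (with sup bound `M0` and Hölder constant `M1`, so
`‖g‖_{C^β} ≤ M0 + M1`), then
`|∫_s^t e^{iξ·w_r} g_r dr| ≤ C K ‖g‖_{C^β} |t−s|^γ |ξ|^{−ρ}`,
with `C` depending only on `β`, `γ` and `T`. -/
theorem young_weighted_irregular_bound {T γ β : ℝ} (hT : 0 < T) (hγ : 0 < γ)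
    (hγ1 : γ ≤ 1) (hβ : 0 < β) (hβγ : 1 < β + γ) :
    ∃ C : ℝ, 0 < C ∧ ∀ (d : ℕ) (ρ : ℝ), 0 < ρ →
      ∀ w : ℝ → EuclideanSpace ℝ (Fin d), Measurable w →
      ∀ K : ℝ, IsIrregularWith T γ ρ K w →
      ∀ (g : ℝ → ℝ) (M0 M1 : ℝ),
        (∀ r ∈ Set.Icc (0 : ℝ) T, |g r| ≤ M0) →
        (∀ u ∈ Set.Icc (0 : ℝ) T, ∀ v ∈ Set.Icc (0 : ℝ) T,
          |g v - g u| ≤ M1 * |v - u| ^ β) →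
      ∀ ξ : EuclideanSpace ℝ (Fin d), ξ ≠ 0 → ∀ s t : ℝ, 0 ≤ s → s ≤ t → t ≤ T →
        ‖∫ r in s..t,
            (g r : ℂ) * Complex.exp (Complex.I * ((inner ℝ ξ (w r) : ℝ) : ℂ))‖
          ≤ C * K * (M0 + M1) * (t - s) ^ γ * ‖ξ‖ ^ (-ρ) := by
  set θ : ℝ := (2:ℝ) ^ (1 - (β + γ)) with hθdef
  have hθpos : 0 < θ := Real.rpow_pos_of_pos two_pos _
  have hθlt : θ < 1 := Real.rpow_lt_one_of_one_lt_of_neg one_lt_two (by linarith)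
  have hθ2 : θ = 2 * (2:ℝ) ^ (-(β + γ)) := by
    rw [hθdef, sub_eq_add_neg, Real.rpow_add two_pos, Real.rpow_one]
  have hRnn : (0:ℝ) ≤ (2:ℝ) ^ (-(β + γ)) := (Real.rpow_pos_of_pos two_pos _).le
  have hTβ : (0:ℝ) < T ^ β := Real.rpow_pos_of_pos hT β
  set c : ℝ := (2:ℝ) ^ (-(β + γ)) * T ^ β * (1 - θ)⁻¹ with hcdef
  have hcnn : 0 ≤ c := by
    refine mul_nonneg (mul_nonneg hRnn hTβ.le) (inv_nonneg.2 (by linarith))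
  refine ⟨1 + c, by linarith, ?_⟩
  intro d ρ hρ w hw K hK g M0 M1 hM0 hM1 ξ hξ s t hs hst htT
  set X : ℝ := ‖ξ‖ ^ (-ρ) with hXdef
  have hXpos : 0 < X := Real.rpow_pos_of_pos (norm_pos_iff.2 hξ) _
  -- nonnegativity of constants
  have hKnn : 0 ≤ K := by
    have h1 := hK ξ hξ 0 T le_rfl hT.le le_rfl
    rw [sub_zero, ← hXdef] at h1
    by_contra h
    push_neg at h
    have h2 : K * X * T ^ γ < 0 :=
      mul_neg_of_neg_of_pos (mul_neg_of_neg_of_pos h hXpos) (Real.rpow_pos_of_pos hT γ)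
    linarith [(norm_nonneg (phiW w ξ 0 T)).trans h1]
  have hM0nn : 0 ≤ M0 := (abs_nonneg _).trans (hM0 0 ⟨le_rfl, hT.le⟩)
  have hM1nn : 0 ≤ M1 := by
    have h1 := hM1 0 ⟨le_rfl, hT.le⟩ T ⟨hT.le, le_rfl⟩
    rw [sub_zero, abs_of_nonneg hT.le] at h1
    nlinarith [abs_nonneg (g T - g 0), hTβ]
  -- continuity of g on [0,T]
  have hgcont : ContinuousOn g (Set.Icc 0 T) := by
    intro x hx
    have h1 : Filter.Tendsto (fun v : ℝ => |v - x|) (nhds x) (nhds 0) := by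
      have hc : Continuous fun v : ℝ => |v - x| := (continuous_id.sub continuous_const).abs
      simpa using hc.tendsto x
    have h2 : ContinuousAt (fun y : ℝ => y ^ β) 0 :=
      Real.continuousAt_rpow_const 0 β (Or.inr hβ.le)
    have h3 : Filter.Tendsto (fun v : ℝ => M1 * |v - x| ^ β) (nhds x) (nhds 0) := by
      have := (h2.tendsto.comp h1).const_mul M1
      simpa [Real.zero_rpow hβ.ne'] using this
    rw [ContinuousWithinAt, tendsto_iff_dist_tendsto_zero]
    apply squeeze_zero' (Filter.Eventually.of_forall fun v => dist_nonneg)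
      ?_ (h3.mono_left nhdsWithin_le_nhds)
    filter_upwards [self_mem_nhdsWithin] with v hv
    rw [Real.dist_eq]
    exact hM1 x hx v hv
  -- the oscillating factor
  set e : ℝ → ℂ := fun r => Complex.exp (Complex.I * ((inner ℝ ξ (w r) : ℝ) : ℂ)) with hedef
  have hphi : ∀ a b : ℝ, phiW w ξ a b = ∫ r in a..b, e r := fun a b => rfl
  have henorm : ∀ r, ‖e r‖ = 1 := fun r => by
    simp [hedef, Complex.norm_exp]
  have hemeas : Measurable e := by
    exact Complex.measurable_exp.comp
      ((Complex.measurable_ofReal.comp (measurable_const.inner hw)).const_mul _)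
  have hIe : ∀ a b : ℝ, IntervalIntegrable e volume a b := by
    intro a b
    rw [intervalIntegrable_iff]
    refine Integrable.mono' (g := fun _ => (1:ℝ))
      (integrableOn_const measure_Ioc_lt_top.ne) hemeas.aestronglyMeasurable ?_
    exact Filter.Eventually.of_forall fun r => (henorm r).le
  have hgC : AEStronglyMeasurable (fun r => (g r : ℂ)) (volume.restrict (Set.Icc 0 T)) :=
    (Complex.continuous_ofReal.comp_continuousOn hgcont).aestronglyMeasurable
      measurableSet_Icc
  have hIge : ∀ a b : ℝ, 0 ≤ a → a ≤ b → b ≤ T →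
      IntervalIntegrable (fun r => (g r : ℂ) * e r) volume a b := by
    intro a b ha hab hbT
    have hsub : Set.uIoc a b ⊆ Set.Icc 0 T := by
      rw [Set.uIoc_of_le hab]
      exact Set.Ioc_subset_Icc_self.trans (Set.Icc_subset_Icc ha hbT)
    rw [intervalIntegrable_iff]
    refine Integrable.mono' (g := fun _ => M0)
      (integrableOn_const measure_Ioc_lt_top.ne)
      ((hgC.mono_measure (Measure.restrict_mono hsub le_rfl)).mul
        hemeas.aestronglyMeasurable) ?_
    filter_upwards [ae_restrict_mem measurableSet_uIoc] with r hr
    rw [norm_mul, henorm, mul_one, Complex.norm_real]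
    exact hM0 r (hsub hr)
  -- the sewing remainder
  set E : ℝ → ℝ → ℂ :=
    fun a b => (∫ r in a..b, (g r : ℂ) * e r) - (g a : ℂ) * phiW w ξ a b with hEdef
  have hE_single : ∀ a b : ℝ, 0 ≤ a → a ≤ b → b ≤ T →
      E a b = ∫ r in a..b, ((g r : ℂ) - g a) * e r := by
    intro a b ha hab hbT
    simp only [hEdef]
    rw [hphi, ← intervalIntegral.integral_const_mul,
      ← intervalIntegral.integral_sub (hIge a b ha hab hbT) ((hIe a b).const_mul _)]
    congr 1
    ext r
    ring
  have hbase : ∀ a b : ℝ, 0 ≤ a → a ≤ b → b ≤ T →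
      ‖E a b‖ ≤ M1 * (b - a) ^ β * (b - a) := by
    intro a b ha hab hbT
    rw [hE_single a b ha hab hbT]
    have h := intervalIntegral.norm_integral_le_of_norm_le_const
      (C := M1 * (b - a) ^ β) (f := fun r => ((g r : ℂ) - g a) * e r) (a := a) (b := b) ?_
    · rwa [abs_of_nonneg (sub_nonneg.2 hab)] at h
    · intro x hx
      rw [Set.uIoc_of_le hab] at hx
      have hx0 : x ∈ Set.Icc 0 T := ⟨ha.trans hx.1.le, hx.2.trans hbT⟩
      rw [norm_mul, henorm, mul_one, ← Complex.ofReal_sub, Complex.norm_real]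
      calc |g x - g a| ≤ M1 * |x - a| ^ β := hM1 a ⟨ha, hab.trans hbT⟩ x hx0
        _ ≤ M1 * (b - a) ^ β := by
            refine mul_le_mul_of_nonneg_left ?_ hM1nn
            refine Real.rpow_le_rpow (abs_nonneg _) ?_ hβ.le
            rw [abs_of_nonneg (by linarith [hx.1.le])]
            linarith [hx.2]
  have hadd : ∀ a m b : ℝ, 0 ≤ a → a ≤ m → m ≤ b → b ≤ T →
      E a b = E a m + E m b + ((g m : ℂ) - g a) * phiW w ξ m b := by
    intro a m b ha ham hmb hbT
    have h1 : (∫ r in a..b, (g r : ℂ) * e r)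
        = (∫ r in a..m, (g r : ℂ) * e r) + ∫ r in m..b, (g r : ℂ) * e r :=
      (intervalIntegral.integral_add_adjacent_intervals
        (hIge a m ha ham (hmb.trans hbT)) (hIge m b (ha.trans ham) hmb hbT)).symm
    have h2 : phiW w ξ a b = phiW w ξ a m + phiW w ξ m b := by
      rw [hphi, hphi, hphi]
      exact (intervalIntegral.integral_add_adjacent_intervals (hIe a m) (hIe m b)).symm
    simp only [hEdef]
    rw [h1, h2]
    ring
  set q : ℝ := (2:ℝ) ^ (-β) with hqdef
  have hqpos : 0 < q := Real.rpow_pos_of_pos two_pos _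
  have hqlt : q < 1 := Real.rpow_lt_one_of_one_lt_of_neg one_lt_two (by linarith)
  -- the dyadic induction
  have key : ∀ n : ℕ, ∀ a b : ℝ, 0 ≤ a → a ≤ b → b ≤ T →
      ‖E a b‖ ≤ M1 * K * X * (2:ℝ) ^ (-(β + γ)) * (b - a) ^ (β + γ)
          * (∑ k ∈ Finset.range n, θ ^ k)
        + M1 * (b - a) ^ β * (b - a) * q ^ n := by
    intro n
    induction n with
    | zero =>
      intro a b ha hab hbT
      simpa using hbase a b ha hab hbT
    | succ n ih =>
      intro a b ha hab hbT
      set m : ℝ := (a + b) / 2 with hm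
      have ham : a ≤ m := by rw [hm]; linarith
      have hmb : m ≤ b := by rw [hm]; linarith
      have h0m : 0 ≤ m := ha.trans ham
      have hmT : m ≤ T := hmb.trans hbT
      have hH : (0:ℝ) ≤ (b - a) / 2 := by linarith
      have e3 : m - a = (b - a) / 2 := by rw [hm]; ring
      have e4 : b - m = (b - a) / 2 := by rw [hm]; ring
      have e1 : ((b - a) / 2) ^ (β + γ) = (b - a) ^ (β + γ) * (2:ℝ) ^ (-(β + γ)) := by
        rw [Real.div_rpow (by linarith) (by norm_num), Real.rpow_neg (by norm_num),
          div_eq_mul_inv]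
      have e2 : ((b - a) / 2) ^ β = (b - a) ^ β * q := by
        rw [Real.div_rpow (by linarith) (by norm_num), hqdef,
          Real.rpow_neg (by norm_num), div_eq_mul_inv]
      have e5 : ((b - a) / 2) ^ β * ((b - a) / 2) ^ γ
          = (b - a) ^ (β + γ) * (2:ℝ) ^ (-(β + γ)) := by
        rw [← Real.rpow_add_of_nonneg hH hβ.le hγ.le, e1]
      have hEam := ih a m ha ham hmT
      have hEmb := ih m b h0m hmb hbT
      rw [e3] at hEam
      rw [e4] at hEmb
      have hga : ‖(g m : ℂ) - (g a : ℂ)‖ ≤ M1 * ((b - a) / 2) ^ β := by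
        rw [← Complex.ofReal_sub, Complex.norm_real]
        calc |g m - g a| ≤ M1 * |m - a| ^ β := hM1 a ⟨ha, hab.trans hbT⟩ m ⟨h0m, hmT⟩
          _ = M1 * ((b - a) / 2) ^ β := by rw [e3, abs_of_nonneg hH]
      have hphibd : ‖phiW w ξ m b‖ ≤ K * X * ((b - a) / 2) ^ γ := by
        have h := hK ξ hξ m b h0m hmb hbT
        rw [← hXdef, e4] at h
        exact h
      have hcross : ‖((g m : ℂ) - g a) * phiW w ξ m b‖
          ≤ M1 * ((b - a) / 2) ^ β * (K * X * ((b - a) / 2) ^ γ) := by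
        rw [norm_mul]
        exact mul_le_mul hga hphibd (norm_nonneg _)
          (mul_nonneg hM1nn (Real.rpow_nonneg hH β))
      calc ‖E a b‖ = ‖E a m + E m b + ((g m : ℂ) - g a) * phiW w ξ m b‖ := by
            rw [hadd a m b ha ham hmb hbT]
        _ ≤ ‖E a m‖ + ‖E m b‖ + ‖((g m : ℂ) - g a) * phiW w ξ m b‖ := norm_add₃_le
        _ ≤ (M1 * K * X * (2:ℝ) ^ (-(β + γ)) * ((b - a) / 2) ^ (β + γ)
              * (∑ k ∈ Finset.range n, θ ^ k)
              + M1 * ((b - a) / 2) ^ β * ((b - a) / 2) * q ^ n)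
            + (M1 * K * X * (2:ℝ) ^ (-(β + γ)) * ((b - a) / 2) ^ (β + γ)
              * (∑ k ∈ Finset.range n, θ ^ k)
              + M1 * ((b - a) / 2) ^ β * ((b - a) / 2) * q ^ n)
            + M1 * ((b - a) / 2) ^ β * (K * X * ((b - a) / 2) ^ γ) :=
              add_le_add (add_le_add hEam hEmb) hcross
        _ = M1 * K * X * (2:ℝ) ^ (-(β + γ)) * (b - a) ^ (β + γ)
              * (∑ k ∈ Finset.range (n + 1), θ ^ k)
            + M1 * (b - a) ^ β * (b - a) * q ^ (n + 1) := by
            have e7 : M1 * ((b - a) / 2) ^ β * (K * X * ((b - a) / 2) ^ γ)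
                = M1 * K * X * ((b - a) ^ (β + γ) * (2:ℝ) ^ (-(β + γ))) := by
              rw [← e5]; ring
            rw [e7, e1, e2, geom_sum_succ, hθ2, pow_succ]
            ring
  -- pass to the limit
  have hlim : ∀ a b : ℝ, 0 ≤ a → a ≤ b → b ≤ T →
      ‖E a b‖ ≤ M1 * K * X * (2:ℝ) ^ (-(β + γ)) * (b - a) ^ (β + γ) * (1 - θ)⁻¹ := by
    intro a b ha hab hbT
    have htend : Filter.Tendsto
        (fun n : ℕ => M1 * K * X * (2:ℝ) ^ (-(β + γ)) * (b - a) ^ (β + γ)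
            * (∑ k ∈ Finset.range n, θ ^ k)
          + M1 * (b - a) ^ β * (b - a) * q ^ n) Filter.atTop
        (nhds (M1 * K * X * (2:ℝ) ^ (-(β + γ)) * (b - a) ^ (β + γ) * (1 - θ)⁻¹
          + M1 * (b - a) ^ β * (b - a) * 0)) :=
      (((hasSum_geometric_of_lt_one hθpos.le hθlt).tendsto_sum_nat).const_mul _).add
        ((tendsto_pow_atTop_nhds_zero_of_lt_one hqpos.le hqlt).const_mul _)
    have h := ge_of_tendsto htend
      (Filter.Eventually.of_forall fun n => key n a b ha hab hbT)
    simpa using h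
  -- assemble the final bound
  have hts : (0:ℝ) ≤ t - s := by linarith
  have htsT : t - s ≤ T := by linarith
  have hIst : (∫ r in s..t, (g r : ℂ) * e r) = E s t + (g s : ℂ) * phiW w ξ s t := by
    simp only [hEdef]
    ring
  have hgs : ‖(g s : ℂ)‖ ≤ M0 := by
    rw [Complex.norm_real]
    exact hM0 s ⟨hs, hst.trans htT⟩
  have hphist : ‖phiW w ξ s t‖ ≤ K * X * (t - s) ^ γ := by
    have h := hK ξ hξ s t hs hst htT
    rwa [← hXdef] at h
  have h6 : (t - s) ^ (β + γ) ≤ T ^ β * (t - s) ^ γ := by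
    rw [Real.rpow_add_of_nonneg hts hβ.le hγ.le]
    exact mul_le_mul_of_nonneg_right (Real.rpow_le_rpow hts htsT hβ.le)
      (Real.rpow_nonneg hts γ)
  have hKX : (0:ℝ) ≤ K * X * (t - s) ^ γ :=
    mul_nonneg (mul_nonneg hKnn hXpos.le) (Real.rpow_nonneg hts γ)
  show ‖∫ r in s..t, (g r : ℂ) * e r‖ ≤ _
  calc ‖∫ r in s..t, (g r : ℂ) * e r‖
      ≤ ‖E s t‖ + ‖(g s : ℂ)‖ * ‖phiW w ξ s t‖ := by
        rw [hIst]
        exact (norm_add_le _ _).trans (by rw [norm_mul])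
    _ ≤ M1 * K * X * (2:ℝ) ^ (-(β + γ)) * (t - s) ^ (β + γ) * (1 - θ)⁻¹
        + M0 * (K * X * (t - s) ^ γ) :=
        add_le_add (hlim s t hs hst htT)
          (mul_le_mul hgs hphist (norm_nonneg _) hM0nn)
    _ ≤ M1 * K * X * (2:ℝ) ^ (-(β + γ)) * (T ^ β * (t - s) ^ γ) * (1 - θ)⁻¹
        + M0 * (K * X * (t - s) ^ γ) := by
        refine add_le_add_left (mul_le_mul_of_nonneg_right
          (mul_le_mul_of_nonneg_left h6 ?_) (inv_nonneg.2 (sub_nonneg.2 hθlt.le))) _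
        exact mul_nonneg (mul_nonneg (mul_nonneg hM1nn hKnn) hXpos.le) hRnn
    _ = (c * M1 + M0) * (K * X * (t - s) ^ γ) := by
        rw [hcdef]; ring
    _ ≤ (1 + c) * (M0 + M1) * (K * X * (t - s) ^ γ) := by
        refine mul_le_mul_of_nonneg_right ?_ hKX
        nlinarith
    _ = (1 + c) * K * (M0 + M1) * (t - s) ^ γ * X := by ring
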